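/- Cauchy–Schwarz bound for absolute first moments of the multinomial: for every $x$ in the $d$-dimensional simplex, every $m \in \mathbb{N}$, and all $i,j$, $\sum_{k \in \mathbb{N}_0^d \cap m\mathcal{S}} |k_i/m - x_i|\,|k_j/m - x_j|\, P_{k,m}(x) \le \frac{1}{m}\sqrt{x_i(1-x_i)}\sqrt{x_j(1-x_j)} \le \frac{1}{4m}$. -/

import Mathlib

open MeasureTheory Finset

/-- The d-dimensional unit simplex. -/
def simplexSet (d : ℕ) : Set (Fin d → ℝ) :=
  {x | (∀ i, 0 ≤ x i ∧ x i ≤ 1) ∧ ∑ i, x i ≤ 1}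

/-- The lattice points of the discrete simplex `ℕ₀^d ∩ mS`. -/
def grid (d m : ℕ) : Finset (Fin d → ℕ) :=
  (Finset.Icc 0 (fun _ => m)).filter (fun k => ∑ i, k i ≤ m)

/-- Multinomial(m, x) probability mass at k. -/
noncomputable def Pw (d m : ℕ) (k : Fin d → ℕ) (x : Fin d → ℝ) : ℝ :=
  ((m.factorial : ℝ) / ((m - ∑ i, k i).factorial * ∏ i, (k i).factorial)) *
    (1 - ∑ i, x i) ^ (m - ∑ i, k i) * ∏ i, x i ^ k i

/-- Generalized multinomial weight. -/
noncomputable def term (d m : ℕ) (t : ℝ) (y : Fin d → ℝ) (k : Fin d → ℕ) : ℝ :=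
  ((m.factorial : ℝ) / ((m - ∑ i, k i).factorial * ∏ i, (k i).factorial)) *
    t ^ (m - ∑ i, k i) * ∏ i, y i ^ k i

lemma Pw_eq_term (d m : ℕ) (k : Fin d → ℕ) (x : Fin d → ℝ) :
    Pw d m k x = term d m (1 - ∑ i, x i) x k := rfl

lemma mem_grid {d m : ℕ} {k : Fin d → ℕ} : k ∈ grid d m ↔ ∑ i, k i ≤ m := by
  constructor
  · intro h; exact (Finset.mem_filter.1 h).2
  · intro h
    refine Finset.mem_filter.2 ⟨Finset.mem_Icc.2 ⟨fun i => Nat.zero_le _, fun i => ?_⟩, h⟩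
    exact le_trans (Finset.single_le_sum (fun j _ => Nat.zero_le (k j)) (Finset.mem_univ i)) h

/-- Normalization-style identity: generalized multinomial theorem. -/
lemma sum_term (d m : ℕ) (t : ℝ) (y : Fin d → ℝ) :
    ∑ k ∈ grid d m, term d m t y k = (t + ∑ i, y i) ^ m := by
  classical
  have hf : (t + ∑ i, y i) = ∑ o : Option (Fin d), Option.elim o t y := by
    simp [Fintype.sum_option]
  rw [hf, Finset.sum_pow_eq_sum_piAntidiag]
  refine (Finset.sum_nbij' (fun K => fun a => K (some a))
    (fun k => fun o => Option.elim o (m - ∑ i, k i) k) ?_ ?_ ?_ ?_ ?_).symm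
  · intro K hK
    rw [Finset.mem_piAntidiag] at hK
    have : ∑ o : Option (Fin d), K o = m := hK.1
    rw [Fintype.sum_option] at this
    exact mem_grid.2 (by rw [← this]; exact Nat.le_add_left _ _)
  · intro k hk
    have hk' := mem_grid.1 hk
    rw [Finset.mem_piAntidiag]
    refine ⟨?_, fun o _ => Finset.mem_univ o⟩
    rw [Fintype.sum_option]
    simp only [Option.elim]
    exact Nat.sub_add_cancel hk'
  · intro K hK
    rw [Finset.mem_piAntidiag] at hK
    have : ∑ o : Option (Fin d), K o = m := hK.1
    rw [Fintype.sum_option] at this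
    funext o
    cases o with
    | none =>
        simp only [Option.elim]
        exact (Nat.eq_sub_of_add_eq this).symm
    | some a => rfl
  · intro k hk; rfl
  · intro K hK
    rw [Finset.mem_piAntidiag] at hK
    have hsum : ∑ o : Option (Fin d), K o = m := hK.1
    rw [Fintype.sum_option] at hsum
    have hnone : K none = m - ∑ i, K (some i) := Nat.eq_sub_of_add_eq hsum
    -- multinomial cast
    have hspec := Nat.multinomial_spec (Finset.univ : Finset (Option (Fin d))) K
    have hprodfact : ∏ o : Option (Fin d), (K o).factorial
        = (m - ∑ i, K (some i)).factorial * ∏ i, (K (some i)).factorial := by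
      rw [Fintype.prod_option, hnone]
    have hsum' : (∑ o : Option (Fin d), K o) = m := hsum ▸ by rw [Fintype.sum_option]
    have hcast : (Nat.multinomial (Finset.univ : Finset (Option (Fin d))) K : ℝ)
        = (m.factorial : ℝ) / ((m - ∑ i, K (some i)).factorial * ∏ i, (K (some i)).factorial) := by
      have h1 : ((∏ o : Option (Fin d), (K o).factorial : ℕ) : ℝ)
          * (Nat.multinomial (Finset.univ : Finset (Option (Fin d))) K : ℝ)
          = (m.factorial : ℝ) := by
        rw [← Nat.cast_mul, hspec, hsum']
      rw [hprodfact] at h1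
      push_cast at h1 ⊢
      field_simp
      linarith [h1]
    rw [term, hcast, Fintype.prod_option, hnone]
    simp only [Option.elim]
    push_cast
    ring

lemma sum_update_eq {d : ℕ} (k : Fin d → ℕ) (i : Fin d) (b : ℕ) :
    ∑ j, Function.update k i b j = b + ∑ j ∈ Finset.univ \ {i}, k j :=
  Finset.sum_update_of_mem (Finset.mem_univ i) k b

lemma sum_split {d : ℕ} (k : Fin d → ℕ) (i : Fin d) :
    ∑ j, k j = k i + ∑ j ∈ Finset.univ \ {i}, k j := by
  have := sum_update_eq k i (k i)
  rwa [Function.update_eq_self] at this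

lemma prod_fact_update {d : ℕ} (k : Fin d → ℕ) (i : Fin d) (b : ℕ) :
    ∏ j, (Function.update k i b j).factorial
      = b.factorial * ∏ j ∈ Finset.univ \ {i}, (k j).factorial := by
  have h : (fun j => (Function.update k i b j).factorial)
      = Function.update (fun j => (k j).factorial) i b.factorial := by
    funext j
    by_cases hj : j = i
    · subst hj; simp
    · simp [Function.update_of_ne hj]
  rw [h]
  exact Finset.prod_update_of_mem (Finset.mem_univ i) _ _

lemma prod_fact_split {d : ℕ} (k : Fin d → ℕ) (i : Fin d) :
    ∏ j, (k j).factorial = (k i).factorial * ∏ j ∈ Finset.univ \ {i}, (k j).factorial := by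
  have := prod_fact_update k i (k i)
  rwa [Function.update_eq_self] at this

lemma prod_pow_update {d : ℕ} (y : Fin d → ℝ) (k : Fin d → ℕ) (i : Fin d) (b : ℕ) :
    ∏ j, y j ^ (Function.update k i b j)
      = y i ^ b * ∏ j ∈ Finset.univ \ {i}, y j ^ k j := by
  have h : (fun j => y j ^ (Function.update k i b j))
      = Function.update (fun j => y j ^ k j) i (y i ^ b) := by
    funext j
    by_cases hj : j = i
    · subst hj; simp
    · simp [Function.update_of_ne hj]
  rw [h]
  exact Finset.prod_update_of_mem (Finset.mem_univ i) _ _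

lemma prod_pow_split {d : ℕ} (y : Fin d → ℝ) (k : Fin d → ℕ) (i : Fin d) :
    ∏ j, y j ^ k j = y i ^ k i * ∏ j ∈ Finset.univ \ {i}, y j ^ k j := by
  have := prod_pow_update y k i (k i)
  rwa [Function.update_eq_self] at this

/-- Shift identity: first-moment reindexing. -/
lemma sum_shift (d m : ℕ) (t : ℝ) (y : Fin d → ℝ) (i : Fin d) (F : (Fin d → ℕ) → ℝ) :
    ∑ k ∈ grid d (m+1), (k i : ℝ) * term d (m+1) t y k * F k
      = ((m : ℝ) + 1) * y i *
        ∑ k ∈ grid d m, term d m t y k * F (Function.update k i (k i + 1)) := by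
  classical
  rw [Finset.mul_sum]
  rw [← Finset.sum_filter_of_ne (p := fun k => k i ≠ 0)
      (fun k _ hne h0 => hne (by rw [h0]; simp))]
  refine (Finset.sum_nbij' (fun k' => Function.update k' i (k' i + 1))
    (fun k => Function.update k i (k i - 1)) ?_ ?_ ?_ ?_ ?_).symm
  · -- forward membership
    intro k' hk'
    have hS := mem_grid.1 hk'
    refine Finset.mem_filter.2 ⟨mem_grid.2 ?_, by simp⟩
    rw [sum_update_eq]
    have := sum_split k' i
    omega
  · -- backward membership
    intro k hk
    obtain ⟨hk1, hk2⟩ := Finset.mem_filter.1 hk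
    have hS := mem_grid.1 hk1
    have hsp := sum_split k i
    refine mem_grid.2 ?_
    rw [sum_update_eq]
    omega
  · -- left inverse
    intro k' _
    funext j
    by_cases hj : j = i
    · subst hj; simp
    · simp [Function.update_of_ne hj]
  · -- right inverse
    intro k hk
    obtain ⟨_, hk2⟩ := Finset.mem_filter.1 hk
    funext j
    by_cases hj : j = i
    · subst hj; simp only [Function.update_self]; omega
    · simp [Function.update_of_ne hj]
  · -- term identity
    intro k' hk'
    have hS := mem_grid.1 hk'
    set K := Function.update k' i (k' i + 1) with hK
    have hKi : (K i : ℝ) = (k' i : ℝ) + 1 := by simp [hK]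
    have hKsum : ∑ j, K j = (∑ j, k' j) + 1 := by
      rw [hK, sum_update_eq]
      have := sum_split k' i
      omega
    have hexp : (m + 1) - ∑ j, K j = m - ∑ j, k' j := by
      rw [hKsum]; omega
    have hKfact : ((∏ j, (K j).factorial : ℕ) : ℝ)
        = ((k' i : ℝ) + 1) * ((∏ j, (k' j).factorial : ℕ) : ℝ) := by
      rw [hK, prod_fact_update, prod_fact_split k' i]
      push_cast [Nat.factorial_succ]
      ring
    have hKy : ∏ j, y j ^ K j = y i * ∏ j, y j ^ k' j := by
      rw [hK, prod_pow_update, prod_pow_split y k' i, pow_succ]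
      ring
    rw [term, term, hKi, hexp, hKy, hKfact]
    have hmf : (((m+1).factorial : ℕ) : ℝ) = ((m : ℝ) + 1) * (m.factorial : ℝ) := by
      push_cast [Nat.factorial_succ]; ring
    rw [hmf]
    have h1 : ((m - ∑ j, k' j).factorial : ℝ) ≠ 0 := Nat.cast_ne_zero.2 (Nat.factorial_ne_zero _)
    have h2 : ((∏ j, (k' j).factorial : ℕ) : ℝ) ≠ 0 := Nat.cast_ne_zero.2 (by positivity)
    have h3 : ((k' i : ℝ) + 1) ≠ 0 := by positivity
    field_simp

lemma Pw_nonneg {d m : ℕ} {x : Fin d → ℝ} (hx : x ∈ simplexSet d) (k : Fin d → ℕ) :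
    0 ≤ Pw d m k x := by
  obtain ⟨h1, h2⟩ := hx
  refine mul_nonneg (mul_nonneg ?_ ?_) ?_
  · positivity
  · exact pow_nonneg (by linarith) _
  · exact Finset.prod_nonneg fun j _ => pow_nonneg (h1 j).1 _

lemma var_eq (d m : ℕ) (hm : 0 < m) (x : Fin d → ℝ) (hx : x ∈ simplexSet d) (i : Fin d) :
    ∑ k ∈ grid d m, ((k i : ℝ) - m * x i) ^ 2 * Pw d m k x = m * x i * (1 - x i) := by
  classical
  set t : ℝ := 1 - ∑ j, x j with ht
  have hone : t + ∑ j, x j = 1 := by rw [ht]; ring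
  have S0 : ∑ k ∈ grid d m, term d m t x k = 1 := by
    rw [sum_term, hone, one_pow]
  have S1 : ∀ n : ℕ, ∑ k ∈ grid d (n + 1), (k i : ℝ) * term d (n + 1) t x k
      = ((n : ℝ) + 1) * x i := by
    intro n
    have h := sum_shift d n t x i (fun _ => 1)
    simp only [mul_one] at h
    rw [h, sum_term, hone, one_pow, mul_one]
  have S2 : ∑ k ∈ grid d m, (k i : ℝ) * ((k i : ℝ) - 1) * term d m t x k
      = (m : ℝ) * ((m : ℝ) - 1) * x i ^ 2 := by
    match m, hm with
    | 1, _ =>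
      rw [Finset.sum_eq_zero, Nat.cast_one]
      · ring
      · intro k hk
        have hki : k i ≤ 1 := le_trans
          (Finset.single_le_sum (fun j _ => Nat.zero_le (k j)) (Finset.mem_univ i))
          (mem_grid.1 hk)
        interval_cases h : k i <;> simp [h]
    | (n + 2), _ =>
      have h := sum_shift d (n + 1) t x i (fun k => (k i : ℝ) - 1)
      have hL : ∑ k ∈ grid d (n + 2), (k i : ℝ) * ((k i : ℝ) - 1) * term d (n + 2) t x k
          = ∑ k ∈ grid d (n + 2), (k i : ℝ) * term d (n + 2) t x k * ((k i : ℝ) - 1) :=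
        Finset.sum_congr rfl fun k _ => by ring
      have hR : ∑ k ∈ grid d (n + 1),
            term d (n + 1) t x k * ((Function.update k i (k i + 1) i : ℝ) - 1)
          = ∑ k ∈ grid d (n + 1), (k i : ℝ) * term d (n + 1) t x k :=
        Finset.sum_congr rfl fun k _ => by
          simp only [Function.update_self]; push_cast; ring
      rw [hL, h, hR, S1 n]
      push_cast
      ring
  have expand : ∀ k : Fin d → ℕ, ((k i : ℝ) - m * x i) ^ 2 * Pw d m k x
      = (k i : ℝ) * ((k i : ℝ) - 1) * term d m t x k
        + (1 - 2 * m * x i) * ((k i : ℝ) * term d m t x k)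
        + (m * x i) ^ 2 * term d m t x k := by
    intro k
    rw [Pw_eq_term, ← ht]
    ring
  rw [Finset.sum_congr rfl fun k _ => expand k]
  rw [Finset.sum_add_distrib, Finset.sum_add_distrib, ← Finset.mul_sum, ← Finset.mul_sum]
  obtain ⟨n, rfl⟩ : ∃ n, m = n + 1 := ⟨m - 1, by omega⟩
  rw [S2, S1 n, S0]
  push_cast
  ring

/-- Cauchy–Schwarz bound for absolute mixed first moments of the multinomial. -/
theorem multinomial_abs_moment_bound (d m : ℕ) (hm : 0 < m) (x : Fin d → ℝ)
    (hx : x ∈ simplexSet d) (i j : Fin d) :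
    (∑ k ∈ grid d m, |(k i : ℝ) / m - x i| * |(k j : ℝ) / m - x j| * Pw d m k x ≤
      (1 / m) * Real.sqrt (x i * (1 - x i)) * Real.sqrt (x j * (1 - x j))) ∧
    (1 / m) * Real.sqrt (x i * (1 - x i)) * Real.sqrt (x j * (1 - x j)) ≤
      1 / (4 * m) := by
  have hm' : (0 : ℝ) < m := by exact_mod_cast hm
  have hxnn : ∀ l : Fin d, 0 ≤ x l * (1 - x l) := fun l =>
    mul_nonneg (hx.1 l).1 (by linarith [(hx.1 l).2])
  have hvar : ∀ l : Fin d, ∑ k ∈ grid d m, ((k l : ℝ) / m - x l) ^ 2 * Pw d m k x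
      = x l * (1 - x l) * (1 / m) := by
    intro l
    have h := var_eq d m hm x hx l
    have hc : ∀ k : Fin d → ℕ, ((k l : ℝ) / m - x l) ^ 2 * Pw d m k x
        = (1 / (m : ℝ) ^ 2) * (((k l : ℝ) - m * x l) ^ 2 * Pw d m k x) := by
      intro k
      have : ((k l : ℝ) / m - x l) ^ 2 = (1 / (m : ℝ) ^ 2) * ((k l : ℝ) - m * x l) ^ 2 := by
        field_simp
      rw [this, mul_assoc]
    rw [Finset.sum_congr rfl fun k _ => hc k, ← Finset.mul_sum, h]
    field_simp
  constructor
  · -- Cauchy–Schwarz step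
    have h := Real.sum_mul_le_sqrt_mul_sqrt (grid d m)
      (fun k => |(k i : ℝ) / m - x i| * Real.sqrt (Pw d m k x))
      (fun k => |(k j : ℝ) / m - x j| * Real.sqrt (Pw d m k x))
    have hL : ∑ k ∈ grid d m,
          (|(k i : ℝ) / m - x i| * Real.sqrt (Pw d m k x)) *
          (|(k j : ℝ) / m - x j| * Real.sqrt (Pw d m k x))
        = ∑ k ∈ grid d m, |(k i : ℝ) / m - x i| * |(k j : ℝ) / m - x j| * Pw d m k x :=
      Finset.sum_congr rfl fun k _ => by
        rw [mul_mul_mul_comm, Real.mul_self_sqrt (Pw_nonneg hx k)]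
    have hsq : ∀ l : Fin d, ∑ k ∈ grid d m,
          (|(k l : ℝ) / m - x l| * Real.sqrt (Pw d m k x)) ^ 2
        = x l * (1 - x l) * (1 / m) := by
      intro l
      rw [← hvar l]
      refine Finset.sum_congr rfl fun k _ => ?_
      rw [mul_pow, sq_abs, Real.sq_sqrt (Pw_nonneg hx k)]
    rw [hL, hsq i, hsq j] at h
    refine h.trans (le_of_eq ?_)
    rw [Real.sqrt_mul (hxnn i), Real.sqrt_mul (hxnn j)]
    have hs : Real.sqrt (1 / m) * Real.sqrt (1 / m) = 1 / m :=
      Real.mul_self_sqrt (by positivity)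
    calc Real.sqrt (x i * (1 - x i)) * Real.sqrt (1 / m) *
          (Real.sqrt (x j * (1 - x j)) * Real.sqrt (1 / m))
        = (Real.sqrt (1 / m) * Real.sqrt (1 / m)) *
            Real.sqrt (x i * (1 - x i)) * Real.sqrt (x j * (1 - x j)) := by ring
      _ = 1 / m * Real.sqrt (x i * (1 - x i)) * Real.sqrt (x j * (1 - x j)) := by rw [hs]
  · -- trivial bound
    have hhalf : ∀ l : Fin d, Real.sqrt (x l * (1 - x l)) ≤ 1 / 2 := by
      intro l
      have h14 : x l * (1 - x l) ≤ 1 / 4 := by nlinarith [(hx.1 l).1, (hx.1 l).2, sq_nonneg (x l - 1 / 2)]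
      calc Real.sqrt (x l * (1 - x l)) ≤ Real.sqrt (1 / 4) := Real.sqrt_le_sqrt h14
        _ = 1 / 2 := by
            rw [show (1 : ℝ) / 4 = (1 / 2) ^ 2 by norm_num, Real.sqrt_sq (by norm_num)]
    have h1 : (1 : ℝ) / m * Real.sqrt (x i * (1 - x i)) * Real.sqrt (x j * (1 - x j))
        ≤ 1 / m * (1 / 2) * (1 / 2) := by
      have him := hhalf i
      have hjm := hhalf j
      have hsi : 0 ≤ Real.sqrt (x i * (1 - x i)) := Real.sqrt_nonneg _
      have hsj : 0 ≤ Real.sqrt (x j * (1 - x j)) := Real.sqrt_nonneg _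
      have hminv : (0 : ℝ) ≤ 1 / m := by positivity
      have hp : Real.sqrt (x i * (1 - x i)) * Real.sqrt (x j * (1 - x j))
          ≤ (1 / 2) * (1 / 2) := mul_le_mul him hjm hsj (by norm_num)
      calc (1 : ℝ) / m * Real.sqrt (x i * (1 - x i)) * Real.sqrt (x j * (1 - x j))
          = (1 / m) * (Real.sqrt (x i * (1 - x i)) * Real.sqrt (x j * (1 - x j))) := by ring
        _ ≤ (1 / m) * ((1 / 2) * (1 / 2)) := mul_le_mul_of_nonneg_left hp hminv
        _ = 1 / m * (1 / 2) * (1 / 2) := by ring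
    refine h1.trans (le_of_eq ?_)
    field_simp
    ring
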